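/- Let $a, b, c, d : (0, h_0) \to \mathbb{C}$ satisfy $a(h), b(h), c(h), d(h) = 1 + O(h)$ as $h \to 0$, let $S \in \mathbb{C}$ with $\operatorname{Re} S > 0$, and let $I \in \mathbb{R}$. Define $T(h) = e^{S/h} \begin{pmatrix} e^{iI/h} & 0 \\ 0 & e^{-iI/h} \end{pmatrix} \begin{pmatrix} a(h) & i b(h) \\ -i c(h) & d(h) \end{pmatrix}$. Then $\operatorname{tr}(T(h)) = e^{S/h}\big(2\cos(I/h) + O(h)\big)$; in particular, if $\operatorname{tr}(T(h)) = 2$ for all small $h$, then $\cos(I/h) = O(h) + O(e^{-\operatorname{Re}(S)/h})$, hence $\cos(I/h) \to 0$ as $h \to 0$. -/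

import Mathlib

open Matrix Complex Filter Topology

/-- Trace asymptotics of a single transition matrix and the resulting
    quantization: `tr T = e^{S/h}(2cos(I/h) + O(h))`, and if `tr T = 2` for all
    small `h`, then `cos(I/h) = O(h) + O(e^{-Re S/h})`, hence `cos(I/h) → 0`. -/
theorem trace_quantization_l_eq_one
    (h₀ : ℝ) (hh₀ : 0 < h₀) (a b c d : ℝ → ℂ)
    (habcd : ∃ C > (0 : ℝ), ∀ h ∈ Set.Ioo (0 : ℝ) h₀,
      ‖a h - 1‖ ≤ C * h ∧ ‖b h - 1‖ ≤ C * h ∧ ‖c h - 1‖ ≤ C * h ∧ ‖d h - 1‖ ≤ C * h)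
    (S : ℂ) (hS : 0 < S.re) (I' : ℝ)
    (T : ℝ → Matrix (Fin 2) (Fin 2) ℂ)
    (hT : ∀ h ∈ Set.Ioo (0 : ℝ) h₀,
      T h = Complex.exp (S / h) •
        ((!![Complex.exp (Complex.I * (I' / h)), 0;
             0, Complex.exp (-(Complex.I * (I' / h)))] : Matrix (Fin 2) (Fin 2) ℂ)
          * !![a h, Complex.I * b h; -(Complex.I * c h), d h])) :
    (∃ C > (0 : ℝ), ∀ h ∈ Set.Ioo (0 : ℝ) h₀,
      ‖(T h).trace - Complex.exp (S / h) * (2 * Complex.cos (I' / h))‖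
        ≤ ‖Complex.exp (S / h)‖ * (C * h))
    ∧ ((∀ h ∈ Set.Ioo (0 : ℝ) h₀, (T h).trace = 2) →
        (∃ C > (0 : ℝ), ∀ h ∈ Set.Ioo (0 : ℝ) h₀,
          ‖Complex.cos ((I' : ℂ) / h)‖ ≤ C * h + C * Real.exp (-S.re / h))
        ∧ Tendsto (fun h : ℝ => Complex.cos ((I' : ℂ) / h))
            (nhdsWithin 0 (Set.Ioi 0)) (nhds 0)) := by
  obtain ⟨C, hC, hab⟩ := habcd
  have key : ∀ h ∈ Set.Ioo (0 : ℝ) h₀,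
      (T h).trace - Complex.exp (S / h) * (2 * Complex.cos ((I' : ℂ) / h))
        = Complex.exp (S / h) *
          (Complex.exp (Complex.I * ((I' : ℂ) / h)) * (a h - 1)
           + Complex.exp (-(Complex.I * ((I' : ℂ) / h))) * (d h - 1)) := by
    intro h hh
    rw [hT h hh, Matrix.trace_smul]
    rw [show (2 : ℂ) * Complex.cos ((I' : ℂ) / h)
        = Complex.exp (((I' : ℂ) / h) * Complex.I)
          + Complex.exp (-((I' : ℂ) / h) * Complex.I) from Complex.two_cos _]
    have e1 : Complex.exp (((I' : ℂ) / h) * Complex.I)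
        = Complex.exp (Complex.I * ((I' : ℂ) / h)) := by rw [mul_comm]
    have e2 : Complex.exp (-((I' : ℂ) / h) * Complex.I)
        = Complex.exp (-(Complex.I * ((I' : ℂ) / h))) := by rw [neg_mul, mul_comm]
    rw [e1, e2]
    simp [Matrix.mul_fin_two, Matrix.trace_fin_two, smul_eq_mul]
    ring
  have hre0 : ∀ h : ℝ, (Complex.I * ((I' : ℂ) / h)).re = 0 := by
    intro h
    have : ((I' : ℂ) / (h : ℂ)) = ((I' / h : ℝ) : ℂ) := by push_cast; ring
    rw [this]; simp
  have hnorm1 : ∀ h : ℝ,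
      ‖Complex.exp (Complex.I * ((I' : ℂ) / h))‖ = 1 := by
    intro h
    rw [Complex.norm_exp, hre0 h, Real.exp_zero]
  have hnorm2 : ∀ h : ℝ,
      ‖Complex.exp (-(Complex.I * ((I' : ℂ) / h)))‖ = 1 := by
    intro h
    rw [Complex.norm_exp, Complex.neg_re, hre0 h, neg_zero,
      Real.exp_zero]
  have bound : ∀ h ∈ Set.Ioo (0 : ℝ) h₀,
      ‖(T h).trace - Complex.exp (S / h) * (2 * Complex.cos ((I' : ℂ) / h))‖
        ≤ ‖Complex.exp (S / h)‖ * (2 * C * h) := by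
    intro h hh
    rw [key h hh, norm_mul]
    gcongr
    calc ‖Complex.exp (Complex.I * ((I' : ℂ) / h)) * (a h - 1)
           + Complex.exp (-(Complex.I * ((I' : ℂ) / h))) * (d h - 1)‖
        ≤ ‖Complex.exp (Complex.I * ((I' : ℂ) / h)) * (a h - 1)‖
          + ‖Complex.exp (-(Complex.I * ((I' : ℂ) / h))) * (d h - 1)‖ :=
          norm_add_le _ _
      _ ≤ C * h + C * h := by
          rw [norm_mul, norm_mul, hnorm1 h, hnorm2 h, one_mul, one_mul]
          exact add_le_add (hab h hh).1 (hab h hh).2.2.2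
      _ = 2 * C * h := by ring
  have hexp : ∀ h : ℝ, ‖Complex.exp (S / h)‖ = Real.exp (S.re / h) := by
    intro h
    rw [Complex.norm_exp]
    congr 1
    exact Complex.div_ofReal_re S h
  refine ⟨⟨2 * C, by positivity, bound⟩, ?_⟩
  intro htr
  have cosbound : ∀ h ∈ Set.Ioo (0 : ℝ) h₀,
      ‖Complex.cos ((I' : ℂ) / h)‖ ≤ (C + 1) * h + (C + 1) * Real.exp (-S.re / h) := by
    intro h hh
    have hE := bound h hh
    rw [htr h hh] at hE
    set E := Real.exp (S.re / h) with hEdef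
    have hEpos : 0 < E := Real.exp_pos _
    rw [hexp h] at hE
    have hprod : ‖Complex.exp (S / h) * (2 * Complex.cos ((I' : ℂ) / h))‖
        ≤ 2 + E * (2 * C * h) := by
      calc ‖Complex.exp (S / h) * (2 * Complex.cos ((I' : ℂ) / h))‖
          = ‖(2 : ℂ) - ((2 : ℂ) - Complex.exp (S / h) * (2 * Complex.cos ((I' : ℂ) / h)))‖ := by
            congr 1; ring
        _ ≤ ‖(2 : ℂ)‖ + ‖(2 : ℂ) - Complex.exp (S / h) * (2 * Complex.cos ((I' : ℂ) / h))‖ :=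
            norm_sub_le _ _
        _ ≤ 2 + E * (2 * C * h) := by
            have h2 : ‖(2 : ℂ)‖ = 2 := by norm_num
            rw [h2]
            exact add_le_add le_rfl hE
    rw [norm_mul, norm_mul, hexp h, ← hEdef] at hprod
    have h2 : ‖(2 : ℂ)‖ = 2 := by norm_num
    rw [h2] at hprod
    have hcos : ‖Complex.cos ((I' : ℂ) / h)‖ ≤ C * h + E⁻¹ := by
      have := hprod
      nlinarith [norm_nonneg (Complex.cos ((I' : ℂ) / h)), mul_pos hEpos hEpos,
        inv_pos.mpr hEpos, mul_inv_cancel₀ (ne_of_gt hEpos)]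
    have hEinv : E⁻¹ = Real.exp (-S.re / h) := by
      rw [hEdef, ← Real.exp_neg]
      congr 1; ring
    rw [hEinv] at hcos
    have hh1 : 0 < h := hh.1
    have he : 0 < Real.exp (-S.re / h) := Real.exp_pos _
    nlinarith
  refine ⟨⟨C + 1, by positivity, cosbound⟩, ?_⟩
  have hev : ∀ᶠ (h : ℝ) in nhdsWithin (0 : ℝ) (Set.Ioi 0),
      ‖Complex.cos ((I' : ℂ) / h)‖ ≤ (C + 1) * h + (C + 1) * Real.exp (-S.re / h) := by
    filter_upwards [Ioo_mem_nhdsGT_of_mem (Set.mem_Ico.mpr ⟨le_refl 0, hh₀⟩)] with h hh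
    exact cosbound h hh
  apply squeeze_zero_norm' hev
  have t1 : Tendsto (fun h : ℝ => (C + 1) * h) (nhdsWithin 0 (Set.Ioi 0)) (nhds 0) := by
    have : Tendsto (fun h : ℝ => (C + 1) * h) (nhds 0) (nhds ((C + 1) * 0)) :=
      (continuous_const.mul continuous_id).tendsto 0
    rw [mul_zero] at this
    exact this.mono_left nhdsWithin_le_nhds
  have t2 : Tendsto (fun h : ℝ => Real.exp (-S.re / h)) (nhdsWithin 0 (Set.Ioi 0)) (nhds 0) := by
    have ha : Tendsto (fun h : ℝ => S.re / h) (nhdsWithin 0 (Set.Ioi 0)) atTop := by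
      have : Tendsto (fun h : ℝ => h⁻¹) (nhdsWithin 0 (Set.Ioi 0)) atTop :=
        tendsto_inv_nhdsGT_zero
      have := this.const_mul_atTop hS
      simpa [div_eq_mul_inv] using this
    have := (Real.tendsto_exp_atTop.comp ha).inv_tendsto_atTop
    have heq : (fun h : ℝ => (Real.exp (S.re / h))⁻¹)
        = fun h : ℝ => Real.exp (-S.re / h) := by
      funext h
      rw [← Real.exp_neg]
      congr 1; ring
    rw [← heq]
    exact this
  have := (t1.add (t2.const_mul (C + 1)))
  simpa using this
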